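/- Let f(x) = x^(2g+1) + h(x)^2 with h ∈ ℤ[x], deg h ≤ g, h(0) odd, h(1) even. Then f(1 - h(1)²) ≡ 1 (mod 8), and hence f(1 - h(1)²) is a square in ℤ₂; in particular there exists a point (a, b) ∈ ℤ₂² with b² = f(a) and a a 2-adic unit. -/

import Mathlib

open Polynomial

private lemma aeval_intCast_pad (f : Polynomial ℤ) (x : ℤ) :
    aeval ((x : ℤ_[2])) f = ((f.eval x : ℤ) : ℤ_[2]) := by
  have := Polynomial.eval₂_hom (Int.castRingHom ℤ_[2]) x (p := f)
  simpa [aeval_def, eval₂_eq_eval_map] using this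

theorem stmt_13 (g : ℕ) (hg : 1 ≤ g) (h : Polynomial ℤ)
    (hdeg : h.natDegree ≤ g) (h0 : Odd (h.eval 0)) (h1 : Even (h.eval 1))
    (f : Polynomial ℤ) (hf : f = X ^ (2 * g + 1) + h ^ 2) :
    (8 : ℤ) ∣ (f.eval (1 - h.eval 1 ^ 2) - 1) ∧
    IsSquare ((f.eval (1 - h.eval 1 ^ 2) : ℤ) : ℤ_[2]) ∧
    ∃ a b : ℤ_[2], b ^ 2 = aeval a f ∧ IsUnit a := by
  obtain ⟨m, hm⟩ := h1
  set e : ℤ := h.eval 1 with he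
  set a : ℤ := 1 - e ^ 2 with ha
  -- Step 1: 8 ∣ f.eval a - 1
  have hdvd : (8 : ℤ) ∣ f.eval a - 1 := by
    have hsub : a - 1 ∣ h.eval a - h.eval 1 := Polynomial.sub_dvd_eval_sub a 1 h
    have ha1 : a - 1 = -(e ^ 2) := by rw [ha]; ring
    rw [ha1, ← he, neg_dvd] at hsub
    obtain ⟨c, hc⟩ := hsub
    have hEa : h.eval a = e + e ^ 2 * c := by linarith
    have hsq : (8 : ℤ) ∣ (h.eval a) ^ 2 - e ^ 2 :=
      ⟨2 * m ^ 3 * c + 2 * m ^ 4 * c ^ 2, by rw [hEa, hm]; ring⟩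
    have hpow : (8 : ℤ) ∣ a ^ (2 * g + 1) - a := by
      have h2 : a ^ 2 ≡ 1 [ZMOD 8] := by
        have : (8 : ℤ) ∣ a ^ 2 - 1 := ⟨-m ^ 2 + 2 * m ^ 4, by rw [ha, hm]; ring⟩
        exact (Int.modEq_iff_dvd.mpr this).symm
      have hg' : (a ^ 2) ^ g ≡ 1 [ZMOD 8] := by
        simpa using h2.pow g
      have hd : (8 : ℤ) ∣ (a ^ 2) ^ g - 1 := (Int.modEq_iff_dvd.mp hg'.symm)
      have : a ^ (2 * g + 1) - a = ((a ^ 2) ^ g - 1) * a := by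
        rw [pow_succ, ← pow_mul]; ring
      rw [this]
      exact hd.mul_right a
    have heq : f.eval a - 1 = (a ^ (2 * g + 1) - a) + ((h.eval a) ^ 2 - e ^ 2) := by
      rw [hf]; simp only [eval_add, eval_pow, eval_X]
      rw [ha]; ring
    rw [heq]
    exact dvd_add hpow hsq
  -- Step 2: square in ℤ_[2]
  have hsq2 : ∃ z : ℤ_[2], z ^ 2 = ((f.eval a : ℤ) : ℤ_[2]) := by
    set c : ℤ_[2] := ((f.eval a : ℤ) : ℤ_[2]) with hcc
    set F : Polynomial ℤ_[2] := X ^ 2 - C c with hF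
    have hev : F.eval 1 = ((1 - f.eval a : ℤ) : ℤ_[2]) := by
      rw [hF]; push_cast; simp [sub_eq_add_neg]; exact hcc
    have hder : F.derivative.eval 1 = (2 : ℤ_[2]) := by
      rw [hF]; simp; norm_num
    have hnormder : ‖F.derivative.eval 1‖ = 2⁻¹ := by
      rw [hder]
      have : ((2 : ℕ) : ℤ_[2]) = (2 : ℤ_[2]) := by norm_num
      rw [← this, PadicInt.norm_p]
      norm_num
    have hnormev : ‖F.eval 1‖ ≤ ((2 : ℕ) : ℝ) ^ (-(3 : ℕ) : ℤ) := by
      rw [hev]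
      refine (PadicInt.norm_int_le_pow_iff_dvd (p := 2)).mpr ?_
      have : ((2:ℤ) ^ (3:ℕ)) = 8 := by norm_num
      rw [show ((2:ℕ) : ℤ) ^ (3:ℕ) = (8:ℤ) by norm_num]
      exact dvd_sub_comm.mp hdvd
    have hlt : ‖F.eval 1‖ < ‖F.derivative.eval 1‖ ^ 2 := by
      rw [hnormder]
      calc ‖F.eval 1‖ ≤ ((2:ℕ) : ℝ) ^ (-(3:ℕ) : ℤ) := hnormev
        _ < 2⁻¹ ^ 2 := by norm_num
    obtain ⟨z, hz, -⟩ := hensels_lemma hlt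
    refine ⟨z, ?_⟩
    have : z ^ 2 - c = 0 := by
      have := hz
      rw [hF] at this
      simpa using this
    exact sub_eq_zero.mp this
  obtain ⟨z, hz⟩ := hsq2
  have haunit : IsUnit ((a : ℤ_[2])) := by
    rw [PadicInt.isUnit_iff]
    refine le_antisymm (PadicInt.norm_le_one _) ?_
    by_contra hlt
    push_neg at hlt
    have hodd : ¬ ((2 : ℤ) ∣ a) := by
      intro hd
      have : (2 : ℤ) ∣ 1 := by
        have h4 : (2:ℤ) ∣ e ^ 2 := ⟨m * e, by rw [hm]; ring⟩
        have := dvd_add hd h4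
        simpa [ha] using this
      norm_num at this
    exact hodd ((PadicInt.norm_int_lt_one_iff_dvd a).mp hlt)
  refine ⟨hdvd, ⟨z, by rw [← hz]; ring⟩, ((a : ℤ) : ℤ_[2]), z, ?_, haunit⟩
  rw [aeval_intCast_pad, hz]
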